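/- For the birth-and-death transition matrix Q on ℕ ∪ {0} with parameters (p_x, r_x, q_x), conditions (e2) and (e3) are together equivalent to the explicit inequalities (bb2) and (bb3): namely, with the convention p_0 = 0, for all y ≥ 2, p_{y−1}q_y/(r_{y−1}² + p_{y−1}q_y + q_{y−1}p_{y−2}) ≤ r_y q_y/(q_y r_{y−1} + r_y q_y) ≤ (r_y² + p_y q_{y+1})/(r_y² + p_y q_{y+1} + q_y p_{y−1}) and p_{y−1}q_y/(r_{y−1}² + p_{y−1}q_y + q_{y−1}p_{y−2}) ≤ p_{y−1}r_y/(p_{y−1}r_y + r_{y−1}p_{y−1}) ≤ (r_y² + p_y q_{y+1})/(r_y² + p_y q_{y+1} + q_y p_{y−1}); together with p_1/(p_1 + r_1) ≤ r_2 + p_2 and p_{y−1} ≤ p_y + r_y for all y ≥ 3. -/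

import Mathlib

open scoped Classical

noncomputable section

/-- `n`-step transition probabilities of a kernel on a countable state space. -/
def kpow {α : Type*} (Q : α → α → ℝ) : ℕ → α → α → ℝ
  | 0 => fun a b => if a = b then 1 else 0
  | n + 1 => fun a b => ∑' c, kpow Q n a c * Q c b

/-- The birth-and-death transition matrix on `ℕ` with `0` absorbing:
`Q(x,x-1) = q x`, `Q(x,x) = r x`, `Q(x,x+1) = p x` for `x ≥ 1`, `Q(0,0) = 1`. -/
def bdQ (p r q : ℕ → ℝ) : ℕ → ℕ → ℝ := fun x y =>
  if x = 0 then (if y = 0 then 1 else 0)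
  else if y = x - 1 then q x else if y = x then r x else if y = x + 1 then p x else 0

/-- `νQ^n(y)`: the (unconditioned) law at time `n` of the chain started from `ν`. -/
def evolveN (Q : ℕ → ℕ → ℝ) (ν : ℕ → ℝ) (n : ℕ) (y : ℕ) : ℝ :=
  ∑' x : ℕ, ν x * kpow Q n x y

/-- `νT_n(y) = νQ^n(y)/(1 - νQ^n(0))` for `y ∈ S = {1,2,...}`, the law at time `n`
conditioned on non-absorption, viewed as a measure on `ℕ` vanishing at `0`. -/
def TN (Q : ℕ → ℕ → ℝ) (ν : ℕ → ℝ) (n : ℕ) (y : ℕ) : ℝ :=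
  if y = 0 then 0 else evolveN Q ν n y / (1 - evolveN Q ν n 0)

/-- A probability measure on `S = {1,2,...}`, viewed as a function on `ℕ`. -/
def IsProbN (ν : ℕ → ℝ) : Prop :=
  ν 0 = 0 ∧ (∀ x, 0 ≤ ν x) ∧ HasSum ν 1

/-- A quasi-stationary distribution: a probability on `S` with `νT_1 = ν`. -/
def IsQSDN (Q : ℕ → ℕ → ℝ) (ν : ℕ → ℝ) : Prop :=
  IsProbN ν ∧ ∀ y, TN Q ν 1 y = ν y

/-- Stochastic domination on `ℕ`: `μ({y, y+1, ...}) ≤ μ'({y, y+1, ...})` for all `y`. -/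
def StochDomN (μ μ' : ℕ → ℝ) : Prop :=
  ∀ y : ℕ, (∑' x : {x : ℕ // y ≤ x}, μ x) ≤ ∑' x : {x : ℕ // y ≤ x}, μ' x

/-- `a(ν) = 1 - νQ(0)`: probability of remaining in `S` after one step from `ν`. -/
def stayProbN (Q : ℕ → ℕ → ℝ) (ν : ℕ → ℝ) : ℝ :=
  1 - ∑' x : ℕ, ν x * Q x 0

/-- The point mass at `x`. -/
def deltaN (x : ℕ) : ℕ → ℝ := fun y => if y = x then 1 else 0

/-- The two-step bridge measure from `x` to `z` (vanishing at `0`). -/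
def brN (p r q : ℕ → ℝ) (x z : ℕ) : ℕ → ℝ := fun w =>
  if w = 0 then 0 else bdQ p r q x w * bdQ p r q w z / kpow (bdQ p r q) 2 x z

/-- The one-step law conditioned on non-absorption (vanishing at `0`). -/
def gN (p r q : ℕ → ℝ) (x : ℕ) : ℕ → ℝ := fun w =>
  if w = 0 then 0 else bdQ p r q x w / (1 - bdQ p r q x 0)

section Aux

variable (p r q : ℕ → ℝ)

lemma bdQ_sub {x : ℕ} (hx : 1 ≤ x) : bdQ p r q x (x-1) = q x := by
  unfold bdQ; rw [if_neg (by omega), if_pos rfl]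

lemma bdQ_self {x : ℕ} (hx : 1 ≤ x) : bdQ p r q x x = r x := by
  unfold bdQ; rw [if_neg (by omega), if_neg (by omega), if_pos rfl]

lemma bdQ_add {x : ℕ} (hx : 1 ≤ x) : bdQ p r q x (x+1) = p x := by
  unfold bdQ; rw [if_neg (by omega), if_neg (by omega), if_neg (by omega), if_pos rfl]

lemma bdQ_out {x w : ℕ} (h1 : w ≠ x - 1) (h2 : w ≠ x) (h3 : w ≠ x + 1) :
    bdQ p r q x w = 0 := by
  unfold bdQ; split_ifs <;> first | rfl | (exfalso; omega)

lemma kpow_one (Q : ℕ → ℕ → ℝ) (a b : ℕ) : kpow Q 1 a b = Q a b := by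
  have h : kpow Q 1 a b = ∑' c, kpow Q 0 a c * Q c b := by rw [kpow]; rfl
  rw [h]
  simp only [kpow]
  rw [tsum_eq_single a (fun c hc => by rw [if_neg (Ne.symm hc), zero_mul])]
  rw [if_pos rfl, one_mul]

lemma kpow_two {x : ℕ} (hx : 1 ≤ x) (z : ℕ) :
    kpow (bdQ p r q) 2 x z =
      q x * bdQ p r q (x-1) z + r x * bdQ p r q x z + p x * bdQ p r q (x+1) z := by
  show (∑' c, kpow (bdQ p r q) 1 x c * bdQ p r q c z) = _
  simp only [kpow_one]
  rw [tsum_eq_sum (s := {x-1, x, x+1})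
    (fun c hc => by
      simp only [Finset.mem_insert, Finset.mem_singleton] at hc
      push_neg at hc
      rw [bdQ_out p r q hc.1 hc.2.1 hc.2.2, zero_mul])]
  rw [Finset.sum_insert (by simp only [Finset.mem_insert, Finset.mem_singleton]; omega),
    Finset.sum_insert (by simp only [Finset.mem_insert, Finset.mem_singleton]; omega),
    Finset.sum_singleton, bdQ_sub p r q hx, bdQ_self p r q hx, bdQ_add p r q hx]
  ring

lemma tail_three (f : ℕ → ℝ) (a y : ℕ)
    (hf : ∀ w, w ≠ a → w ≠ a+1 → w ≠ a+2 → f w = 0) :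
    (∑' x : {x : ℕ // y ≤ x}, f x) =
      (if y ≤ a then f a else 0) + (if y ≤ a+1 then f (a+1) else 0)
        + (if y ≤ a+2 then f (a+2) else 0) := by
  have h1 : (∑' x : {x : ℕ // y ≤ x}, f x)
      = ∑' w, Set.indicator {x | y ≤ x} f w := tsum_subtype {x | y ≤ x} f
  rw [h1, tsum_eq_sum (s := ({a, a+1, a+2} : Finset ℕ))
    (fun w hw => by
      simp only [Finset.mem_insert, Finset.mem_singleton] at hw
      push_neg at hw
      rw [Set.indicator_apply]
      split
      · exact hf w hw.1 hw.2.1 hw.2.2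
      · rfl)]
  rw [Finset.sum_insert (by simp only [Finset.mem_insert, Finset.mem_singleton]; omega),
    Finset.sum_insert (by simp only [Finset.mem_insert, Finset.mem_singleton]; omega),
    Finset.sum_singleton]
  simp only [Set.indicator_apply, Set.mem_setOf_eq]
  ring

lemma bdQ_zero_left {z : ℕ} (hz : 1 ≤ z) : bdQ p r q 0 z = 0 := by
  unfold bdQ; rw [if_pos rfl, if_neg (by omega)]

lemma brN_eq {x z : ℕ} (hz : 1 ≤ z) (w : ℕ) :
    brN p r q x z w = bdQ p r q x w * bdQ p r q w z / kpow (bdQ p r q) 2 x z := by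
  unfold brN
  split
  · rename_i h; subst h
    rw [bdQ_zero_left p r q hz, mul_zero, zero_div]
  · rfl

lemma brN_tail {x : ℕ} (hx : 1 ≤ x) (z y : ℕ) :
    (∑' w : {w : ℕ // y ≤ w}, brN p r q x z w) =
      (if y ≤ x-1 then brN p r q x z (x-1) else 0)
        + (if y ≤ x then brN p r q x z x else 0)
        + (if y ≤ x+1 then brN p r q x z (x+1) else 0) := by
  have h := tail_three (brN p r q x z) (x-1) y (by
    intro w h1 h2 h3
    unfold brN
    split
    · rfl
    · rw [bdQ_out p r q (by omega) (by omega) (by omega), zero_mul, zero_div])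
  rw [h, show x-1+1 = x by omega, show x-1+2 = x+1 by omega]

lemma gN_tail {x : ℕ} (hx : 1 ≤ x) (y : ℕ) :
    (∑' w : {w : ℕ // y ≤ w}, gN p r q x w) =
      (if y ≤ x-1 then gN p r q x (x-1) else 0)
        + (if y ≤ x then gN p r q x x else 0)
        + (if y ≤ x+1 then gN p r q x (x+1) else 0) := by
  have h := tail_three (gN p r q x) (x-1) y (by
    intro w h1 h2 h3
    unfold gN
    split
    · rfl
    · rw [bdQ_out p r q (by omega) (by omega) (by omega), zero_div])
  rw [h, show x-1+1 = x by omega, show x-1+2 = x+1 by omega]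

lemma Qsq_diag (hp0 : p 0 = 0) {x : ℕ} (hx : 1 ≤ x) :
    kpow (bdQ p r q) 2 x x = q x * p (x-1) + r x * r x + p x * q (x+1) := by
  rw [kpow_two p r q hx, bdQ_self p r q hx]
  have h1 : bdQ p r q (x-1) x = p (x-1) := by
    rcases Nat.eq_or_lt_of_le hx with h | h
    · rw [← h]
      show bdQ p r q 0 1 = p 0
      rw [bdQ_zero_left p r q le_rfl, hp0]
    · have h2 := bdQ_add p r q (x := x-1) (by omega)
      rwa [show x-1+1 = x by omega] at h2
  have h2 : bdQ p r q (x+1) x = q (x+1) := by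
    have h3 := bdQ_sub p r q (x := x+1) (by omega)
    rwa [show x+1-1 = x by omega] at h3
  rw [h1, h2]

lemma Qsq_up {x : ℕ} (hx : 1 ≤ x) :
    kpow (bdQ p r q) 2 x (x+1) = r x * p x + p x * r (x+1) := by
  rw [kpow_two p r q hx, bdQ_add p r q hx,
    bdQ_out p r q (x := x-1) (w := x+1) (by omega) (by omega) (by omega),
    bdQ_self p r q (x := x+1) (by omega)]
  ring

lemma Qsq_down {x : ℕ} (hx : 2 ≤ x) :
    kpow (bdQ p r q) 2 x (x-1) = q x * r (x-1) + r x * q x := by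
  rw [kpow_two p r q (by omega), bdQ_sub p r q (by omega),
    bdQ_self p r q (x := x-1) (by omega),
    bdQ_out p r q (x := x+1) (w := x-1) (by omega) (by omega) (by omega)]
  ring

lemma Qsq_vanish {x z : ℕ} (hx : 1 ≤ x) (h : x + 2 < z ∨ z + 2 < x) :
    kpow (bdQ p r q) 2 x z = 0 := by
  rw [kpow_two p r q hx,
    bdQ_out p r q (x := x-1) (w := z) (by omega) (by omega) (by omega),
    bdQ_out p r q (x := x) (w := z) (by omega) (by omega) (by omega),
    bdQ_out p r q (x := x+1) (w := z) (by omega) (by omega) (by omega)]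
  ring

variable (hp : ∀ x, 1 ≤ x → 0 < p x) (hr : ∀ x, 1 ≤ x → 0 < r x)
  (hq : ∀ x, 1 ≤ x → 0 < q x) (hp0 : p 0 = 0)

include hp hp0 in
lemma p_nonneg : ∀ x, 0 ≤ p x := by
  intro x
  rcases Nat.eq_zero_or_pos x with h | h
  · rw [h, hp0]
  · exact (hp x h).le

set_option linter.unusedSectionVars false in
include hp hr hq hp0 in
lemma bdQ_nonneg : ∀ a b, 0 ≤ bdQ p r q a b := by
  intro a b
  unfold bdQ
  split_ifs with h1 h2 h3 h4 h5
  · norm_num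
  · norm_num
  · exact (hq a (Nat.one_le_iff_ne_zero.mpr h1)).le
  · exact (hr a (Nat.one_le_iff_ne_zero.mpr h1)).le
  · exact (hp a (Nat.one_le_iff_ne_zero.mpr h1)).le
  · norm_num

include hp hr hq hp0 in
lemma brN_nonneg {x z : ℕ} (hpos : 0 < kpow (bdQ p r q) 2 x z) (w : ℕ) :
    0 ≤ brN p r q x z w := by
  unfold brN
  split
  · exact le_rfl
  · exact div_nonneg (mul_nonneg (bdQ_nonneg p r q hp hr hq hp0 _ _)
      (bdQ_nonneg p r q hp hr hq hp0 _ _)) hpos.le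

lemma brN_total {x z : ℕ} (hx : 1 ≤ x) (hz : 1 ≤ z)
    (hpos : 0 < kpow (bdQ p r q) 2 x z) :
    brN p r q x z (x-1) + brN p r q x z x + brN p r q x z (x+1) = 1 := by
  rw [brN_eq p r q hz, brN_eq p r q hz, brN_eq p r q hz, ← add_div,
    ← add_div, bdQ_sub p r q hx, bdQ_self p r q hx, bdQ_add p r q hx,
    ← kpow_two p r q hx z]
  exact div_self (ne_of_gt hpos)

include hp hr hq hp0 in
lemma Qsq_diag_pos {x : ℕ} (hx : 1 ≤ x) : 0 < kpow (bdQ p r q) 2 x x := by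
  rw [Qsq_diag p r q hp0 hx]
  have h1 : 0 ≤ q x * p (x-1) := mul_nonneg (hq x hx).le (p_nonneg p hp hp0 _)
  have h2 : 0 < r x * r x := mul_pos (hr x hx) (hr x hx)
  have h3 : 0 < p x * q (x+1) := mul_pos (hp x hx) (hq (x+1) (by omega))
  linarith

include hp hr in
lemma Qsq_up_pos {x : ℕ} (hx : 1 ≤ x) : 0 < kpow (bdQ p r q) 2 x (x+1) := by
  rw [Qsq_up p r q hx]
  have h1 : 0 < r x * p x := mul_pos (hr x hx) (hp x hx)
  have h2 : 0 < p x * r (x+1) := mul_pos (hp x hx) (hr (x+1) (by omega))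
  linarith

include hr hq in
lemma Qsq_down_pos {x : ℕ} (hx : 2 ≤ x) : 0 < kpow (bdQ p r q) 2 x (x-1) := by
  rw [Qsq_down p r q hx]
  have h1 : 0 < q x * r (x-1) := mul_pos (hq x (by omega)) (hr (x-1) (by omega))
  have h2 : 0 < r x * q x := mul_pos (hr x (by omega)) (hq x (by omega))
  linarith

-- tail values in the window
lemma tailA (hp0 : p 0 = 0) (y : ℕ) (hy : 2 ≤ y) :
    (∑' w : {w : ℕ // y ≤ w}, brN p r q (y-1) (y-1) w) =
      p (y-1) * q y / (r (y-1) ^ 2 + p (y-1) * q y + q (y-1) * p (y-2)) := by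
  rw [brN_tail p r q (by omega : 1 ≤ y-1), if_neg (by omega), if_neg (by omega),
    if_pos (by omega), zero_add, zero_add, show y-1+1 = y by omega,
    brN_eq p r q (by omega : 1 ≤ y-1)]
  have h1 : bdQ p r q (y-1) y = p (y-1) := by
    have h := bdQ_add p r q (x := y-1) (by omega)
    rwa [show y-1+1 = y by omega] at h
  rw [h1, bdQ_sub p r q (by omega : 1 ≤ y), Qsq_diag p r q hp0 (by omega : 1 ≤ y-1),
    show y-1-1 = y-2 by omega, show y-1+1 = y by omega,
    show q (y-1) * p (y-2) + r (y-1) * r (y-1) + p (y-1) * q y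
      = r (y-1) ^ 2 + p (y-1) * q y + q (y-1) * p (y-2) by ring]

lemma tailB (y : ℕ) (hy : 2 ≤ y) :
    (∑' w : {w : ℕ // y ≤ w}, brN p r q y (y-1) w) =
      r y * q y / (q y * r (y-1) + r y * q y) := by
  rw [brN_tail p r q (by omega : 1 ≤ y), if_neg (by omega), if_pos (by omega),
    if_pos (by omega), zero_add,
    brN_eq p r q (by omega : 1 ≤ y-1), brN_eq p r q (by omega : 1 ≤ y-1),
    bdQ_self p r q (by omega : 1 ≤ y), bdQ_sub p r q (by omega : 1 ≤ y),
    bdQ_out p r q (x := y+1) (w := y-1) (by omega) (by omega) (by omega),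
    Qsq_down p r q hy]
  ring

lemma tailC (hp0 : p 0 = 0) (y : ℕ) (hy : 2 ≤ y) :
    (∑' w : {w : ℕ // y ≤ w}, brN p r q y y w) =
      (r y ^ 2 + p y * q (y+1)) / (r y ^ 2 + p y * q (y+1) + q y * p (y-1)) := by
  rw [brN_tail p r q (by omega : 1 ≤ y), if_neg (by omega), if_pos (by omega),
    if_pos (by omega), zero_add,
    brN_eq p r q (by omega : 1 ≤ y), brN_eq p r q (by omega : 1 ≤ y),
    bdQ_self p r q (by omega : 1 ≤ y), bdQ_add p r q (by omega : 1 ≤ y)]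
  have h2 : bdQ p r q (y+1) y = q (y+1) := by
    have h := bdQ_sub p r q (x := y+1) (by omega)
    rwa [show y+1-1 = y by omega] at h
  rw [h2, Qsq_diag p r q hp0 (by omega : 1 ≤ y), ← add_div,
    show q y * p (y-1) + r y * r y + p y * q (y+1)
      = r y ^ 2 + p y * q (y+1) + q y * p (y-1) by ring,
    show r y * r y + p y * q (y+1) = r y ^ 2 + p y * q (y+1) by ring]

lemma tailD (y : ℕ) (hy : 2 ≤ y) :
    (∑' w : {w : ℕ // y ≤ w}, brN p r q (y-1) y w) =
      p (y-1) * r y / (p (y-1) * r y + r (y-1) * p (y-1)) := by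
  rw [brN_tail p r q (by omega : 1 ≤ y-1), if_neg (by omega), if_neg (by omega),
    if_pos (by omega), zero_add, zero_add, show y-1+1 = y by omega,
    brN_eq p r q (by omega : 1 ≤ y)]
  have h1 : bdQ p r q (y-1) y = p (y-1) := by
    have h := bdQ_add p r q (x := y-1) (by omega)
    rwa [show y-1+1 = y by omega] at h
  have h2 : kpow (bdQ p r q) 2 (y-1) y = r (y-1) * p (y-1) + p (y-1) * r y := by
    have h := Qsq_up p r q (x := y-1) (by omega)
    rwa [show y-1+1 = y by omega] at h
  rw [h1, bdQ_self p r q (by omega : 1 ≤ y), h2,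
    show r (y-1) * p (y-1) + p (y-1) * r y
      = p (y-1) * r y + r (y-1) * p (y-1) by ring]

end Aux

/-- For the birth-and-death matrix `Q` with parameters `(p_x, r_x, q_x)` (and the
convention `p_0 = 0`), the stochastic-domination conditions (e2) and (e3) are together
equivalent to the explicit inequalities (bb2) and (bb3). -/
theorem bd_conditions_equiv (p r q : ℕ → ℝ)
    (hp : ∀ x, 1 ≤ x → 0 < p x) (hr : ∀ x, 1 ≤ x → 0 < r x)
    (hq : ∀ x, 1 ≤ x → 0 < q x)
    (hsum : ∀ x, 1 ≤ x → p x + r x + q x = 1)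
    (hp0 : p 0 = 0) :
    ((∀ x x' z z' : ℕ, 1 ≤ x → 1 ≤ z → x ≤ x' → z ≤ z' →
        0 < kpow (bdQ p r q) 2 x z → 0 < kpow (bdQ p r q) 2 x' z' →
        StochDomN
          (fun w => if w = 0 then 0 else
            bdQ p r q x w * bdQ p r q w z / kpow (bdQ p r q) 2 x z)
          (fun w => if w = 0 then 0 else
            bdQ p r q x' w * bdQ p r q w z' / kpow (bdQ p r q) 2 x' z')) ∧
      (∀ x x' : ℕ, 1 ≤ x → x ≤ x' →
        StochDomN
          (fun w => if w = 0 then 0 else bdQ p r q x w / (1 - bdQ p r q x 0))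
          (fun w => if w = 0 then 0 else bdQ p r q x' w / (1 - bdQ p r q x' 0))))
    ↔
    ((∀ y : ℕ, 2 ≤ y →
        (p (y-1) * q y / (r (y-1) ^ 2 + p (y-1) * q y + q (y-1) * p (y-2)) ≤
            r y * q y / (q y * r (y-1) + r y * q y) ∧
          r y * q y / (q y * r (y-1) + r y * q y) ≤
            (r y ^ 2 + p y * q (y+1)) / (r y ^ 2 + p y * q (y+1) + q y * p (y-1)) ∧
          p (y-1) * q y / (r (y-1) ^ 2 + p (y-1) * q y + q (y-1) * p (y-2)) ≤
            p (y-1) * r y / (p (y-1) * r y + r (y-1) * p (y-1)) ∧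
          p (y-1) * r y / (p (y-1) * r y + r (y-1) * p (y-1)) ≤
            (r y ^ 2 + p y * q (y+1)) / (r y ^ 2 + p y * q (y+1) + q y * p (y-1)))) ∧
      (p 1 / (p 1 + r 1) ≤ r 2 + p 2 ∧ ∀ y : ℕ, 3 ≤ y → p (y-1) ≤ p y + r y)) := by
  constructor
  · rintro ⟨he2, he3⟩
    refine ⟨fun y hy => ?_, ?_, fun y hy => ?_⟩
    · -- (bb2)
      have posA : 0 < kpow (bdQ p r q) 2 (y-1) (y-1) :=
        Qsq_diag_pos p r q hp hr hq hp0 (by omega)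
      have posB : 0 < kpow (bdQ p r q) 2 y (y-1) := Qsq_down_pos p r q hr hq hy
      have posC : 0 < kpow (bdQ p r q) 2 y y :=
        Qsq_diag_pos p r q hp hr hq hp0 (by omega)
      have posD : 0 < kpow (bdQ p r q) 2 (y-1) y := by
        have h := Qsq_up_pos p r q hp hr (x := y-1) (by omega)
        rwa [show y-1+1 = y by omega] at h
      have hAB : (∑' w : {w : ℕ // y ≤ w}, brN p r q (y-1) (y-1) w)
          ≤ ∑' w : {w : ℕ // y ≤ w}, brN p r q y (y-1) w :=
        he2 (y-1) y (y-1) (y-1) (by omega) (by omega) (by omega) le_rfl posA posB y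
      have hBC : (∑' w : {w : ℕ // y ≤ w}, brN p r q y (y-1) w)
          ≤ ∑' w : {w : ℕ // y ≤ w}, brN p r q y y w :=
        he2 y y (y-1) y (by omega) (by omega) le_rfl (by omega) posB posC y
      have hAD : (∑' w : {w : ℕ // y ≤ w}, brN p r q (y-1) (y-1) w)
          ≤ ∑' w : {w : ℕ // y ≤ w}, brN p r q (y-1) y w :=
        he2 (y-1) (y-1) (y-1) y (by omega) (by omega) le_rfl (by omega) posA posD y
      have hDC : (∑' w : {w : ℕ // y ≤ w}, brN p r q (y-1) y w)
          ≤ ∑' w : {w : ℕ // y ≤ w}, brN p r q y y w :=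
        he2 (y-1) y y y (by omega) (by omega) (by omega) le_rfl posD posC y
      rw [tailA p r q hp0 y hy, tailB p r q y hy] at hAB
      rw [tailB p r q y hy, tailC p r q hp0 y hy] at hBC
      rw [tailA p r q hp0 y hy, tailD p r q y hy] at hAD
      rw [tailD p r q y hy, tailC p r q hp0 y hy] at hDC
      exact ⟨hAB, hBC, hAD, hDC⟩
    · -- (bb3) first part
      have h12 : (∑' w : {w : ℕ // (2:ℕ) ≤ w}, gN p r q 1 w)
          ≤ ∑' w : {w : ℕ // (2:ℕ) ≤ w}, gN p r q 2 w :=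
        he3 1 2 le_rfl (by omega) 2
      have b10 : bdQ p r q 1 0 = q 1 := by unfold bdQ; norm_num
      have b12 : bdQ p r q 1 2 = p 1 := by unfold bdQ; norm_num
      have b20 : bdQ p r q 2 0 = 0 := by unfold bdQ; norm_num
      have b22 : bdQ p r q 2 2 = r 2 := by unfold bdQ; norm_num
      have b23 : bdQ p r q 2 3 = p 2 := by unfold bdQ; norm_num
      have hpr : (0:ℝ) < p 1 + r 1 := by
        have := hp 1 le_rfl; have := hr 1 le_rfl; linarith
      have hq1 : (1:ℝ) - q 1 = p 1 + r 1 := by have := hsum 1 le_rfl; linarith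
      have g2 : gN p r q 1 2 = p 1 / (p 1 + r 1) := by
        unfold gN; rw [if_neg (by norm_num), b12, b10, hq1]
      have g2' : gN p r q 2 2 = r 2 := by
        unfold gN; rw [if_neg (by norm_num), b22, b20, sub_zero, div_one]
      have g3' : gN p r q 2 3 = p 2 := by
        unfold gN; rw [if_neg (by norm_num), b23, b20, sub_zero, div_one]
      rw [gN_tail p r q le_rfl 2, gN_tail p r q (by omega : 1 ≤ 2) 2] at h12
      rw [if_neg (by omega), if_neg (by omega), if_pos (by omega), if_neg (by omega),
        if_pos (by omega), if_pos (by omega)] at h12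
      norm_num [g2, g2', g3'] at h12
      exact h12
    · -- (bb3) second part
      have h := he3 (y-1) y (by omega) (by omega) y
      have hgt : (∑' w : {w : ℕ // y ≤ w}, gN p r q (y-1) w)
          ≤ ∑' w : {w : ℕ // y ≤ w}, gN p r q y w := h
      have h0 : bdQ p r q (y-1) 0 = 0 :=
        bdQ_out p r q (by omega) (by omega) (by omega)
      have h0' : bdQ p r q y 0 = 0 :=
        bdQ_out p r q (by omega) (by omega) (by omega)
      have g1 : gN p r q (y-1) y = p (y-1) := by
        unfold gN
        rw [if_neg (by omega), h0, sub_zero, div_one]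
        have hb := bdQ_add p r q (x := y-1) (by omega)
        rwa [show y-1+1 = y by omega] at hb
      have g2 : gN p r q y y = r y := by
        unfold gN
        rw [if_neg (by omega), h0', sub_zero, div_one, bdQ_self p r q (by omega)]
      have g3 : gN p r q y (y+1) = p y := by
        unfold gN
        rw [if_neg (by omega), h0', sub_zero, div_one, bdQ_add p r q (by omega)]
      rw [gN_tail p r q (by omega : 1 ≤ y-1) y, gN_tail p r q (by omega : 1 ≤ y) y,
        show y-1+1 = y by omega] at hgt
      rw [if_neg (by omega), if_neg (by omega), if_pos (by omega), if_neg (by omega),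
        if_pos (by omega), if_pos (by omega)] at hgt
      rw [g1, g2, g3] at hgt
      linarith
  · rintro ⟨hbb2, hbb31, hbb32⟩
    constructor
    · -- (e2)
      intro x x' z z' hx hz hxx' hzz' hpos hpos'
      show StochDomN (brN p r q x z) (brN p r q x' z')
      intro y
      have hx' : 1 ≤ x' := le_trans hx hxx'
      have hz' : 1 ≤ z' := le_trans hz hzz'
      have hzx' : z' ≤ x' + 2 := by
        by_contra hcon
        rw [Qsq_vanish p r q hx' (Or.inl (by omega))] at hpos'
        exact lt_irrefl 0 hpos'
      by_cases hc1 : y < x' ∨ y < z'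
      · have htot' : brN p r q x' z' (x'-1) + brN p r q x' z' x'
            + brN p r q x' z' (x'+1) = 1 := brN_total p r q hx' hz' hpos'
        have hT' : (∑' w : {w : ℕ // y ≤ w}, brN p r q x' z' w) = 1 := by
          rw [brN_tail p r q hx']
          by_cases h1 : y ≤ x' - 1
          · rw [if_pos h1, if_pos (by omega), if_pos (by omega)]; exact htot'
          · have hb1 : brN p r q x' z' (x'-1) = 0 := by
              rw [brN_eq p r q hz',
                bdQ_out p r q (x := x'-1) (w := z') (by omega) (by omega) (by omega),
                mul_zero, zero_div]
            by_cases h2 : y ≤ x'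
            · rw [if_neg h1, if_pos h2, if_pos (by omega), ← htot', hb1]
            · have hb2 : brN p r q x' z' x' = 0 := by
                rw [brN_eq p r q hz',
                  bdQ_out p r q (x := x') (w := z') (by omega) (by omega) (by omega),
                  mul_zero, zero_div]
              rw [if_neg h1, if_neg h2, if_pos (by omega), ← htot', hb1, hb2]
        have hT : (∑' w : {w : ℕ // y ≤ w}, brN p r q x z w) ≤ 1 := by
          rw [brN_tail p r q hx, ← brN_total p r q hx hz hpos]
          have n1 := brN_nonneg p r q hp hr hq hp0 hpos (x-1)
          have n2 := brN_nonneg p r q hp hr hq hp0 hpos x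
          have n3 := brN_nonneg p r q hp hr hq hp0 hpos (x+1)
          split_ifs <;> linarith
        rw [hT']; exact hT
      · by_cases hc2 : x + 1 < y ∨ z + 1 < y
        · have key : ∀ w, y ≤ w → brN p r q x z w = 0 := by
            intro w hw
            rw [brN_eq p r q hz]
            rcases hc2 with h | h
            · rw [bdQ_out p r q (x := x) (w := w) (by omega) (by omega) (by omega),
                zero_mul, zero_div]
            · rw [bdQ_out p r q (x := w) (w := z) (by omega) (by omega) (by omega),
                mul_zero, zero_div]
          have hT : (∑' w : {w : ℕ // y ≤ w}, brN p r q x z w) = 0 := by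
            rw [brN_tail p r q hx]
            have e1 : (if y ≤ x - 1 then brN p r q x z (x-1) else 0) = 0 := by
              split_ifs with h; exacts [key _ (by omega), rfl]
            have e2 : (if y ≤ x then brN p r q x z x else 0) = 0 := by
              split_ifs with h; exacts [key _ (by omega), rfl]
            have e3 : (if y ≤ x + 1 then brN p r q x z (x+1) else 0) = 0 := by
              split_ifs with h; exacts [key _ (by omega), rfl]
            rw [e1, e2, e3]; ring
          have hT' : (0:ℝ) ≤ ∑' w : {w : ℕ // y ≤ w}, brN p r q x' z' w := by
            rw [brN_tail p r q hx']
            have n1 := brN_nonneg p r q hp hr hq hp0 hpos' (x'-1)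
            have n2 := brN_nonneg p r q hp hr hq hp0 hpos' x'
            have n3 := brN_nonneg p r q hp hr hq hp0 hpos' (x'+1)
            split_ifs <;> linarith
          rw [hT]; exact hT'
        · push_neg at hc1 hc2
          by_cases hy2 : 2 ≤ y
          · obtain ⟨i1, i2, i3, i4⟩ := hbb2 y hy2
            have hx4 : x = y - 1 ∨ x = y := by omega
            have hz4 : z = y - 1 ∨ z = y := by omega
            have hx4' : x' = y - 1 ∨ x' = y := by omega
            have hz4' : z' = y - 1 ∨ z' = y := by omega
            rcases hx4 with h | h <;> rcases hz4 with h' | h' <;>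
              rcases hx4' with h'' | h'' <;> rcases hz4' with h''' | h''' <;>
              rw [h, h', h'', h'''] <;>
              first
                | exact le_rfl
                | (exfalso; omega)
                | (rw [tailA p r q hp0 y hy2, tailB p r q y hy2]; exact i1)
                | (rw [tailA p r q hp0 y hy2, tailD p r q y hy2]; exact i3)
                | (rw [tailA p r q hp0 y hy2, tailC p r q hp0 y hy2];
                    exact le_trans i1 i2)
                | (rw [tailD p r q y hy2, tailC p r q hp0 y hy2]; exact i4)
                | (rw [tailB p r q y hy2, tailC p r q hp0 y hy2]; exact i2)
          · obtain rfl : x = x' := by omega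
            obtain rfl : z = z' := by omega
            exact le_rfl
    · -- (e3)
      intro x x' hx hxx'
      show StochDomN (gN p r q x) (gN p r q x')
      have hstep : ∀ m, 1 ≤ m → ∀ yy,
          (∑' w : {w : ℕ // yy ≤ w}, gN p r q m w)
            ≤ ∑' w : {w : ℕ // yy ≤ w}, gN p r q (m+1) w := by
        intro m hm yy
        rw [gN_tail p r q hm, gN_tail p r q (by omega : 1 ≤ m+1)]
        rcases Nat.lt_or_ge m 2 with hm2 | hm2
        · obtain rfl : m = 1 := by omega
          have b10 : bdQ p r q 1 0 = q 1 := by unfold bdQ; norm_num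
          have b11 : bdQ p r q 1 1 = r 1 := by unfold bdQ; norm_num
          have b12 : bdQ p r q 1 2 = p 1 := by unfold bdQ; norm_num
          have b20 : bdQ p r q 2 0 = 0 := by unfold bdQ; norm_num
          have b21 : bdQ p r q 2 1 = q 2 := by unfold bdQ; norm_num
          have b22 : bdQ p r q 2 2 = r 2 := by unfold bdQ; norm_num
          have b23 : bdQ p r q 2 3 = p 2 := by unfold bdQ; norm_num
          have hpr : (0:ℝ) < p 1 + r 1 := by
            have := hp 1 le_rfl; have := hr 1 le_rfl; linarith
          have hq1 : (1:ℝ) - q 1 = p 1 + r 1 := by have := hsum 1 le_rfl; linarith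
          have g0 : gN p r q 1 0 = 0 := by unfold gN; norm_num
          have g1 : gN p r q 1 1 = r 1 / (p 1 + r 1) := by
            unfold gN; rw [if_neg one_ne_zero, b11, b10, hq1]
          have g2 : gN p r q 1 2 = p 1 / (p 1 + r 1) := by
            unfold gN; rw [if_neg (by norm_num), b12, b10, hq1]
          have g1' : gN p r q 2 1 = q 2 := by
            unfold gN; rw [if_neg one_ne_zero, b21, b20, sub_zero, div_one]
          have g2' : gN p r q 2 2 = r 2 := by
            unfold gN; rw [if_neg (by norm_num), b22, b20, sub_zero, div_one]
          have g3' : gN p r q 2 3 = p 2 := by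
            unfold gN; rw [if_neg (by norm_num), b23, b20, sub_zero, div_one]
          simp only [show (1:ℕ)-1 = 0 by norm_num, show (1:ℕ)+1 = 2 by norm_num,
            show (2:ℕ)-1 = 1 by norm_num, show (2:ℕ)+1 = 3 by norm_num]
          rw [g0, g1, g2, g1', g2', g3']
          have hdiv : r 1 / (p 1 + r 1) + p 1 / (p 1 + r 1) = 1 := by
            rw [← add_div, show r 1 + p 1 = p 1 + r 1 by ring]
            exact div_self (ne_of_gt hpr)
          have hs2 := hsum 2 (by omega)
          have hp2 := hp 2 (by omega)
          split_ifs <;> first | (exfalso; omega) | linarith [hbb31]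
        · have h0 : bdQ p r q m 0 = 0 :=
            bdQ_out p r q (by omega) (by omega) (by omega)
          have h0' : bdQ p r q (m+1) 0 = 0 :=
            bdQ_out p r q (by omega) (by omega) (by omega)
          have g1 : gN p r q m (m-1) = q m := by
            unfold gN
            rw [if_neg (by omega), h0, sub_zero, div_one, bdQ_sub p r q (by omega)]
          have g2 : gN p r q m m = r m := by
            unfold gN
            rw [if_neg (by omega), h0, sub_zero, div_one, bdQ_self p r q (by omega)]
          have g3 : gN p r q m (m+1) = p m := by
            unfold gN
            rw [if_neg (by omega), h0, sub_zero, div_one, bdQ_add p r q (by omega)]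
          have g1' : gN p r q (m+1) (m+1-1) = q (m+1) := by
            unfold gN
            rw [if_neg (by omega), h0', sub_zero, div_one, bdQ_sub p r q (by omega)]
          have g2' : gN p r q (m+1) (m+1) = r (m+1) := by
            unfold gN
            rw [if_neg (by omega), h0', sub_zero, div_one, bdQ_self p r q (by omega)]
          have g3' : gN p r q (m+1) (m+1+1) = p (m+1) := by
            unfold gN
            rw [if_neg (by omega), h0', sub_zero, div_one, bdQ_add p r q (by omega)]
          rw [g1, g2, g3, g1', g2', g3']
          have hsm := hsum m (by omega)
          have hsm1 := hsum (m+1) (by omega)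
          have hqm := hq m (by omega)
          have hpm1 := hp (m+1) (by omega)
          have hb := hbb32 (m+1) (by omega)
          rw [show m+1-1 = m by omega] at hb
          split_ifs <;> first | (exfalso; omega) | linarith
      obtain ⟨k, rfl⟩ : ∃ k, x' = x + k := ⟨x' - x, by omega⟩
      clear hxx'
      induction k with
      | zero => intro yy; exact le_rfl
      | succ n ih => intro yy; exact le_trans (ih yy) (hstep (x+n) (by omega) yy)
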